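/- If the order ∅([F] ++ S ++ R) coincides with ∅(S ++ R), then for any formula S_a, the order ∅([F] ++ S ++ [S_a] ++ R) coincides with ∅(S ++ [S_a] ++ R): inserting a revision anywhere after a redundant first revision preserves its redundancy. -/
import Mathlib


/-- Propositional formulas over variables of type `α`. -/
inductive PropForm (α : Type) : Type
  | var : α → PropForm α
  | tru : PropForm α
  | fls : PropForm α
  | neg : PropForm α → PropForm α
  | conj : PropForm α → PropForm α → PropForm α
  | disj : PropForm α → PropForm α → PropForm α

namespace PropForm
/-- Evaluation of a formula in a valuation (model). -/
def eval {α : Type} (v : α → Bool) : PropForm α → Bool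
  | var a => v a
  | tru => true
  | fls => false
  | neg f => !(eval v f)
  | conj f g => eval v f && eval v g
  | disj f g => eval v f || eval v g
end PropForm

/-- A model `I` satisfies formula `A`. -/
def Sat {α : Type} (I : α → Bool) (A : PropForm α) : Prop := PropForm.eval I A = true

/-- The order induced by a single formula: `I ≤_A J` iff `I ⊨ A` or `J ⊭ A`. -/
def leA {α : Type} (A : PropForm α) (I J : α → Bool) : Prop := Sat I A ∨ ¬ Sat J A

/-- Auxiliary: the order generated from the flat state by a revision sequence given
in reverse order (most recent revision first). -/
def leSeqRev {α : Type} (I J : α → Bool) : List (PropForm α) → Prop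
  | [] => True
  | A :: S' => leA A I J ∧ (¬ leA A J I ∨ leSeqRev I J S')

/-- `I ≤_{∅S} J`: the order generated from the flat state by the sequence `S` of
lexicographic revisions (given in chronological order, so the last element of `S`
is the most recent revision).  It satisfies `leSeq [] I J ↔ True` and
`leSeq (S' ++ [A]) I J ↔ leA A I J ∧ (¬ leA A J I ∨ leSeq S' I J)`. -/
def leSeq {α : Type} (S : List (PropForm α)) (I J : α → Bool) : Prop :=
  leSeqRev I J S.reverse

/-- `I ≡_{∅S} J`: equivalence of models in the order generated by `S`. -/
def equivSeq {α : Type} (S : List (PropForm α)) (I J : α → Bool) : Prop :=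
  leSeq S I J ∧ leSeq S J I


lemma leSeqRev_append {α : Type} (I J : α → Bool) (X Y : List (PropForm α)) :
    leSeqRev I J (X ++ Y) ↔ leSeqRev I J X ∧ (¬ leSeqRev J I X ∨ leSeqRev I J Y) := by
  induction X with
  | nil => simp [leSeqRev]
  | cons A X ih => simp only [List.cons_append, leSeqRev, ih]; tauto

/-- STATEMENT 14: inserting a revision anywhere after a redundant first revision
preserves its redundancy. -/
theorem redundancy_insert_anywhere {α : Type} (F : PropForm α) (S R : List (PropForm α))
    (h : ∀ I J : α → Bool, leSeq (F :: (S ++ R)) I J ↔ leSeq (S ++ R) I J)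
    (Sa : PropForm α) :
    ∀ I J : α → Bool, leSeq (F :: (S ++ Sa :: R)) I J ↔ leSeq (S ++ Sa :: R) I J := by
  intro I J
  have h' := h I J
  simp only [leSeq, List.reverse_cons, List.reverse_append, List.append_assoc] at h' ⊢
  simp only [leSeqRev_append, leSeqRev, List.append_eq, List.nil_append, List.append_nil] at h' ⊢
  tauto
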